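/- Let A be a bounded operator on K_θ satisfying A - S_θ A S_θ* = ψ₁ ⊗ k_0 + k_0 ⊗ χ₁ for some ψ₁, χ₁ ∈ K_θ, and suppose the closure of Ran A decomposes as a direct sum F₁ ⊕ F₂ of closed subspaces with S_θ F₁ ⊆ F₁ + span{k_0}, S_θ F₂ ⊆ F₂ + span{v} where v = ∂̄ⁿk_0 ∉ closure(Ran A) and k_0 ∈ F₂ when n ≥ 1. Let 𝒫 be the projection onto F₂ ⊕ span{v} along F₁ (defined on F₁ ⊕ F₂ ⊕ span{v}, extended appropriately). Then A₂ = 𝒫A also satisfies A₂ - S_θ A₂ S_θ* = ψ ⊗ k_0 + k_0 ⊗ χ for some ψ, χ ∈ K_θ. -/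

import Mathlib

open MeasureTheory Complex ComplexConjugate AddCircle

noncomputable section

/-- The Hardy space `H²` inside `L²` of the circle: classes whose Fourier coefficients of
negative index vanish. -/
def hardySpace (T : ℝ) [hT : Fact (0 < T)] :
    Submodule ℂ (Lp ℂ 2 (@haarAddCircle T hT)) where
  carrier := {f | ∀ n : ℤ, n < 0 → fourierBasis.repr f n = 0}
  add_mem' := by
    intro f g hf hg n hn
    simp [map_add, hf n hn, hg n hn]
  zero_mem' := by intro n hn; simp
  smul_mem' := by
    intro c f hf n hn
    simp [_root_.map_smul, hf n hn]

/-- The subspace `θH²` of `L²` of the circle. -/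
def thetaH2 (T : ℝ) [hT : Fact (0 < T)] (θ : Lp ℂ 2 (@haarAddCircle T hT)) :
    Submodule ℂ (Lp ℂ 2 (@haarAddCircle T hT)) where
  carrier := {g | ∃ f ∈ hardySpace T, (g : AddCircle T → ℂ) =ᵐ[haarAddCircle]
    fun x => (θ : AddCircle T → ℂ) x * (f : AddCircle T → ℂ) x}
  add_mem' := by
    rintro g1 g2 ⟨f1, hf1, e1⟩ ⟨f2, hf2, e2⟩
    refine ⟨f1 + f2, add_mem hf1 hf2, ?_⟩
    filter_upwards [Lp.coeFn_add g1 g2, Lp.coeFn_add f1 f2, e1, e2] with x h1 h2 h3 h4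
    simp only [Pi.add_apply, h1, h2, h3, h4]
    ring
  zero_mem' := by
    refine ⟨0, zero_mem _, ?_⟩
    filter_upwards [Lp.coeFn_zero ℂ 2 (@haarAddCircle T hT)] with x hx
    simp [hx]
  smul_mem' := by
    rintro c g ⟨f, hf, e⟩
    refine ⟨c • f, Submodule.smul_mem _ c hf, ?_⟩
    filter_upwards [Lp.coeFn_smul c g, Lp.coeFn_smul c f, e] with x h1 h2 h3
    simp only [Pi.smul_apply, h1, h2, h3, smul_eq_mul]
    ring

/-- The model space `K_θ = H² ⊖ θH²`. -/
def modelSpace (T : ℝ) [hT : Fact (0 < T)] (θ : Lp ℂ 2 (@haarAddCircle T hT)) :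
    Submodule ℂ (Lp ℂ 2 (@haarAddCircle T hT)) :=
  hardySpace T ⊓ (thetaH2 T θ)ᗮ

/-- The analytic extension of an element of `H²` to the disk, via its Taylor/Fourier series. -/
def extDisk (T : ℝ) [hT : Fact (0 < T)] (f : Lp ℂ 2 (@haarAddCircle T hT)) (z : ℂ) : ℂ :=
  ∑' n : ℕ, fourierBasis.repr f (n : ℤ) * z ^ n

/-- `θ` is an inner function: it belongs to `H²` and has unimodular boundary values a.e. -/
def IsInner (T : ℝ) [hT : Fact (0 < T)] (θ : Lp ℂ 2 (@haarAddCircle T hT)) : Prop :=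
  θ ∈ hardySpace T ∧ ∀ᵐ x ∂(@haarAddCircle T hT), ‖(θ : AddCircle T → ℂ) x‖ = 1

/-- `S` is the restricted shift `S_θ : f ↦ P_θ(z f)` on `K_θ`: for each `f ∈ K_θ` there is a
representative `zf` of `z·f` in `L²` with `zf - S f` orthogonal to `K_θ`. -/
def IsRestrictedShift (T : ℝ) [hT : Fact (0 < T)] (θ : Lp ℂ 2 (@haarAddCircle T hT))
    (S : modelSpace T θ → modelSpace T θ) : Prop :=
  ∀ f : modelSpace T θ, ∃ zf : Lp ℂ 2 (@haarAddCircle T hT),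
    ((zf : AddCircle T → ℂ) =ᵐ[@haarAddCircle T hT]
      fun x => fourier 1 x * ((f : Lp ℂ 2 (@haarAddCircle T hT)) : AddCircle T → ℂ) x) ∧
    ∀ h ∈ modelSpace T θ,
      @inner ℂ _ _ (zf - ((S f : modelSpace T θ) : Lp ℂ 2 (@haarAddCircle T hT))) h = 0
set_option maxHeartbeats 1000000 in
/-- Splitting lemma: if `A` satisfies Sarason's identity, `closure(Ran A) = F₁ ⊕ F₂` with
`S_θ F₁ ⊆ F₁ + span{k₀}`, `S_θ F₂ ⊆ F₂ + span{v}` where `v = ∂̄ⁿk₀ ∉ closure(Ran A)` and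
`k₀ ∈ F₂` when `n ≥ 1`, and `𝒫` is the projection onto `F₂ ⊕ span{v}` along `F₁`, then
`A₂ = 𝒫A` also satisfies Sarason's identity. -/
theorem stmt19 (T : ℝ) [hT : Fact (0 < T)] (θ : Lp ℂ 2 (@haarAddCircle T hT))
    (hθ : IsInner T θ) [CompleteSpace (modelSpace T θ)]
    (S : modelSpace T θ →L[ℂ] modelSpace T θ) (hS : IsRestrictedShift T θ S)
    (A : modelSpace T θ →L[ℂ] modelSpace T θ)
    (k0 : modelSpace T θ)
    (hk0 : ((k0 : Lp ℂ 2 (@haarAddCircle T hT)) : AddCircle T → ℂ) =ᵐ[@haarAddCircle T hT]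
      fun x => 1 - conj (extDisk T θ 0) * (θ : AddCircle T → ℂ) x)
    (n : ℕ) (v : modelSpace T θ)
    (hv : ∀ f : modelSpace T θ,
      @inner ℂ _ _ v f = iteratedDeriv n (extDisk T (f : Lp ℂ 2 (@haarAddCircle T hT))) 0)
    (ψ₁ χ₁ : modelSpace T θ)
    (hid : ∀ h : modelSpace T θ,
      A h - S (A (ContinuousLinearMap.adjoint S h)) =
        (@inner ℂ _ _ k0 h) • ψ₁ + (@inner ℂ _ _ χ₁ h) • k0)
    (F1 F2 : Submodule ℂ (modelSpace T θ))
    (hF1c : IsClosed (F1 : Set (modelSpace T θ)))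
    (hF2c : IsClosed (F2 : Set (modelSpace T θ)))
    (hdisj : F1 ⊓ F2 = ⊥)
    (hran : (LinearMap.range (A : modelSpace T θ →ₗ[ℂ] modelSpace T θ)).topologicalClosure
      = F1 ⊔ F2)
    (hSF1 : ∀ x ∈ F1, S x ∈ F1 ⊔ Submodule.span ℂ {k0})
    (hSF2 : ∀ x ∈ F2, S x ∈ F2 ⊔ Submodule.span ℂ {v})
    (hvnot : v ∉
      (LinearMap.range (A : modelSpace T θ →ₗ[ℂ] modelSpace T θ)).topologicalClosure)
    (hk0F2 : 1 ≤ n → k0 ∈ F2)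
    (P : modelSpace T θ →L[ℂ] modelSpace T θ)
    (hPfix : ∀ x ∈ F2 ⊔ Submodule.span ℂ {v}, P x = x)
    (hPker : ∀ x ∈ F1, P x = 0)
    (hPrange : ∀ x : modelSpace T θ, P x ∈ F2 ⊔ Submodule.span ℂ {v}) :
    ∃ ψ χ : modelSpace T θ, ∀ h : modelSpace T θ,
      (P ∘L A) h - S ((P ∘L A) (ContinuousLinearMap.adjoint S h)) =
        (@inner ℂ _ _ k0 h) • ψ + (@inner ℂ _ _ χ h) • k0 := by
  classical
  -- Step 1: P k0 = k0
  have hPk0 : P k0 = k0 := by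
    by_cases hn : 1 ≤ n
    · exact hPfix k0 (Submodule.mem_sup_left (hk0F2 hn))
    · have hn0 : n = 0 := by omega
      subst hn0
      -- a.e. description of the constant-one Fourier basis vector
      have hone : ((fourierBasis (0:ℤ) : Lp ℂ 2 (@haarAddCircle T hT)) : AddCircle T → ℂ)
          =ᵐ[@haarAddCircle T hT] fun _ => (1:ℂ) := by
        rw [coe_fourierBasis]
        filter_upwards [coeFn_fourierLp 2 (0:ℤ)] with x hx
        rw [hx]; exact fourier_zero
      have hθH : θ ∈ thetaH2 T θ := by
        refine ⟨(fourierBasis (0:ℤ) : Lp ℂ 2 (@haarAddCircle T hT)), ?_, ?_⟩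
        · intro m hm
          rw [fourierBasis.repr_self]
          exact lp.single_apply_ne _ _ _ hm.ne
        · filter_upwards [hone] with x hx
          rw [hx, mul_one]
      have hk0eq : (k0 : Lp ℂ 2 (@haarAddCircle T hT))
          = (fourierBasis (0:ℤ) : Lp ℂ 2 (@haarAddCircle T hT))
            - (starRingEnd ℂ (extDisk T θ 0)) • θ := by
        apply MeasureTheory.Lp.ext
        filter_upwards [hk0,
          MeasureTheory.Lp.coeFn_sub (fourierBasis (0:ℤ) : Lp ℂ 2 (@haarAddCircle T hT))
            ((starRingEnd ℂ (extDisk T θ 0)) • θ),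
          MeasureTheory.Lp.coeFn_smul (starRingEnd ℂ (extDisk T θ 0)) θ, hone]
          with x h1 h2 h3 h4
        rw [h1, h2, Pi.sub_apply, h3, Pi.smul_apply, h4, smul_eq_mul]
      have hrepr : ∀ f : modelSpace T θ, (@inner ℂ _ _ v f) = (@inner ℂ _ _ k0 f) := by
        intro f
        have hV : (@inner ℂ _ _ v f)
            = fourierBasis.repr (f : Lp ℂ 2 (@haarAddCircle T hT)) 0 := by
          rw [hv f, iteratedDeriv_zero]
          unfold extDisk
          rw [tsum_eq_single 0 (fun m hm => by simp [zero_pow hm])]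
          simp
        have horth : (@inner ℂ _ _ θ ((f : Lp ℂ 2 (@haarAddCircle T hT)) )) = 0 :=
          ((Submodule.mem_orthogonal _ _).mp f.2.2) θ hθH
        have hK0f : (@inner ℂ _ _ k0 f)
            = fourierBasis.repr (f : Lp ℂ 2 (@haarAddCircle T hT)) 0 := by
          rw [Submodule.coe_inner, hk0eq, inner_sub_left, inner_smul_left, horth,
            mul_zero, sub_zero, fourierBasis.repr_apply_apply]
        rw [hV, hK0f]
      have hvk : v = k0 := by
        have h0 : (@inner ℂ _ _ (v - k0) (v - k0)) = (0:ℂ) := by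
          rw [inner_sub_left, hrepr (v - k0), sub_self]
        exact sub_eq_zero.mp (inner_self_eq_zero.mp h0)
      exact hPfix k0 (Submodule.mem_sup_right
        (Submodule.mem_span_singleton.mpr ⟨1, by rw [one_smul, hvk]⟩))
  -- Step 2: range of A lies in F1 ⊔ F2
  have hranle : ∀ x, A x ∈ F1 ⊔ F2 := by
    intro x
    have hx : A x ∈ (LinearMap.range
        (A : modelSpace T θ →ₗ[ℂ] modelSpace T θ)).topologicalClosure :=
      Submodule.le_topologicalClosure _ ⟨x, rfl⟩
    rwa [hran] at hx
  -- Step 3: the commutator of P and S on F1 ⊔ F2 is a multiple of k0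
  have key : ∀ x ∈ F1 ⊔ F2, ∃ c : ℂ, P (S x) - S (P x) = c • k0 := by
    intro x hx
    obtain ⟨x1, hx1, x2, hx2, rfl⟩ := Submodule.mem_sup.mp hx
    obtain ⟨y1, hy1, z1, hz1, hsum1⟩ := Submodule.mem_sup.mp (hSF1 x1 hx1)
    obtain ⟨c1, rfl⟩ := Submodule.mem_span_singleton.mp hz1
    refine ⟨c1, ?_⟩
    have e1 : P (S x1) = c1 • k0 := by
      rw [← hsum1, map_add, hPker y1 hy1, ContinuousLinearMap.map_smul, hPk0, zero_add]
    have e2 : P (S x2) = S x2 := hPfix _ (hSF2 x2 hx2)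
    have e3 : P x1 = 0 := hPker x1 hx1
    have e4 : P x2 = x2 := hPfix x2 (Submodule.mem_sup_left hx2)
    rw [map_add S x1 x2, map_add P (S x1) (S x2), map_add P x1 x2, e1, e2, e3, e4,
      zero_add]
    abel
  -- Step 4: pointwise version of the Sarason identity for P ∘ A, with varying coefficient μ
  set ψ : modelSpace T θ := P ψ₁ with hψdef
  have stepC : ∀ h : modelSpace T θ, ∃ μ : ℂ,
      (P ∘L A) h - S ((P ∘L A) (ContinuousLinearMap.adjoint S h)) =
        (@inner ℂ _ _ k0 h) • ψ + μ • k0 := by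
    intro h
    obtain ⟨c, hc⟩ := key (A (ContinuousLinearMap.adjoint S h))
      (hranle (ContinuousLinearMap.adjoint S h))
    refine ⟨(@inner ℂ _ _ χ₁ h) + c, ?_⟩
    have hSP : S (P (A (ContinuousLinearMap.adjoint S h)))
        = P (S (A (ContinuousLinearMap.adjoint S h))) - c • k0 := by
      rw [← hc]; abel
    have h1 : P (A h) - P (S (A (ContinuousLinearMap.adjoint S h)))
        = (@inner ℂ _ _ k0 h) • ψ + (@inner ℂ _ _ χ₁ h) • k0 := by
      rw [← map_sub, hid h, map_add, ContinuousLinearMap.map_smul, ContinuousLinearMap.map_smul, hPk0, hψdef]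
    have h2 : P (A h) - S (P (A (ContinuousLinearMap.adjoint S h)))
        = ((@inner ℂ _ _ k0 h) • ψ + (@inner ℂ _ _ χ₁ h) • k0) + c • k0 := by
      rw [hSP, ← h1]; abel
    simp only [ContinuousLinearMap.comp_apply]
    rw [h2, add_smul]; abel
  -- Step 5: conclude, splitting on whether k0 = 0
  by_cases hk : k0 = 0
  · refine ⟨0, 0, fun h => ?_⟩
    obtain ⟨μ, hμ⟩ := stepC h
    rw [hμ, hk]
    simp
  · set Dop : modelSpace T θ →L[ℂ] modelSpace T θ :=
      P ∘L A - S ∘L ((P ∘L A) ∘L ContinuousLinearMap.adjoint S) with hDop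
    have hDopApp : ∀ h : modelSpace T θ,
        Dop h = (P ∘L A) h - S ((P ∘L A) (ContinuousLinearMap.adjoint S h)) := fun h => rfl
    have hKne : (@inner ℂ _ _ k0 k0) ≠ 0 := fun h0 => hk (inner_self_eq_zero.mp h0)
    set χ : modelSpace T θ := (starRingEnd ℂ (@inner ℂ _ _ k0 k0))⁻¹ •
        (ContinuousLinearMap.adjoint Dop k0 - (starRingEnd ℂ (@inner ℂ _ _ k0 ψ)) • k0)
      with hχdef
    refine ⟨ψ, χ, fun h => ?_⟩
    obtain ⟨μ, hμ⟩ := stepC h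
    have hmain : Dop h = (@inner ℂ _ _ k0 h) • ψ + μ • k0 := by rw [hDopApp]; exact hμ
    have hinner : (@inner ℂ _ _ χ h) = μ := by
      rw [hχdef, inner_smul_left (E := modelSpace T θ), inner_sub_left,
        inner_smul_left (E := modelSpace T θ),
        ContinuousLinearMap.adjoint_inner_left, hmain, inner_add_right,
        inner_smul_right (E := modelSpace T θ), inner_smul_right (E := modelSpace T θ)]
      have hKne' : (starRingEnd ℂ) (@inner ℂ _ _ k0 k0) ≠ 0 := by
        simpa using hKne
      have hKne2 : (@inner ℂ _ _ (k0 : Lp ℂ 2 (@haarAddCircle T hT))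
          (k0 : Lp ℂ 2 (@haarAddCircle T hT))) ≠ 0 := by
        rw [← Submodule.coe_inner]; exact hKne
      simp only [map_inv₀, Complex.conj_conj]
      field_simp
      ring
    rw [← hDopApp, hmain, hinner]

end
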